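/- Let (s_j)_{j∈ℤ}, (t_j)_{j∈ℤ} be two-sided sequences of positive reals, (X_j') a bi-infinite solution of X_{j+1}' = max(X_j' - t_{j+1}, s_{j+1}), and suppose that for some n ≥ 1 the sum ∑_{ℓ=-n+1}^{0} t_ℓ > X_{-n}'. Then X_0' = max_{-n < j ≤ 0} [ s_j - ∑_{ℓ=j+1}^{0} t_ℓ ], and in particular X_0' ≤ X_0* = sup_{k ≥ 0} [ s_{-k} - ∑_{ℓ=-k+1}^{0} t_ℓ ]. -/

import Mathlib

lemma aux6 (s t X' : ℤ → ℝ)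
    (hX' : ∀ j : ℤ, X' (j + 1) = max (X' j - t (j + 1)) (s (j + 1))) (a : ℤ) :
    ∀ m : ℕ, ∀ hm : 1 ≤ m,
      X' (a + m) = max (X' a - ∑ ℓ ∈ Finset.Icc (a + 1) (a + m), t ℓ)
        ((Finset.Icc (a + 1) (a + m)).sup'
          (Finset.nonempty_Icc.mpr (by omega))
          (fun j => s j - ∑ ℓ ∈ Finset.Icc (j + 1) (a + m), t ℓ)) := by
  intro m hm
  induction m, hm using Nat.le_induction with
  | base =>
    simp only [Nat.cast_one]
    rw [hX' a]
    congr 1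
    · rw [Finset.Icc_self, Finset.sum_singleton]
    · rw [Finset.sup'_congr _ (Finset.Icc_self (a+1)) (fun j _ => rfl),
        Finset.sup'_singleton]
      simp [Finset.Icc_eq_empty_of_lt (by omega : a + 1 < a + 1 + 1)]
  | succ m hm1 ih =>
    have hcast : ((m + 1 : ℕ) : ℤ) = (m : ℤ) + 1 := by push_cast; ring
    simp only [hcast, ← add_assoc]
    set b := a + (m : ℤ) with hbdef
    have hne : (Finset.Icc (a + 1) b).Nonempty := Finset.nonempty_Icc.mpr (by omega)
    have key : Finset.Icc (a + 1) (b + 1) = insert (b + 1) (Finset.Icc (a + 1) b) := by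
      ext x; simp; omega
    have hnotmem : (b + 1) ∉ Finset.Icc (a + 1) b := by simp
    have hsum : ∑ ℓ ∈ Finset.Icc (a + 1) (b + 1), t ℓ
        = t (b + 1) + ∑ ℓ ∈ Finset.Icc (a + 1) b, t ℓ := by
      rw [key, Finset.sum_insert hnotmem]
    have hcomp := Finset.comp_sup'_eq_sup'_comp hne (g := fun x : ℝ => x - t (b + 1))
      (f := fun j => s j - ∑ ℓ ∈ Finset.Icc (j + 1) b, t ℓ)
      (fun x y => (max_sub_sub_right x y _).symm)
    simp only [Function.comp] at hcomp
    have hsup : ∀ H, (Finset.Icc (a + 1) (b + 1)).sup' H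
          (fun j => s j - ∑ ℓ ∈ Finset.Icc (j + 1) (b + 1), t ℓ)
        = max (s (b + 1))
          (((Finset.Icc (a + 1) b).sup' hne
            (fun j => s j - ∑ ℓ ∈ Finset.Icc (j + 1) b, t ℓ)) - t (b + 1)) := by
      intro H
      rw [Finset.sup'_congr _ key (fun j _ => rfl), Finset.sup'_insert hne]
      congr 1
      · simp [Finset.Icc_eq_empty_of_lt (by omega : b + 1 < b + 1 + 1)]
      · rw [hcomp]
        apply Finset.sup'_congr _ rfl
        intro j hj
        simp only [Finset.mem_Icc] at hj
        have hins : Finset.Icc (j + 1) (b + 1) = insert (b + 1) (Finset.Icc (j + 1) b) := by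
          ext x; simp; omega
        rw [hins, Finset.sum_insert (by simp)]
        ring
    rw [hX' b, ih, hsum, hsup]
    rw [← max_sub_sub_right]
    have e1 : X' a - (t (b + 1) + ∑ ℓ ∈ Finset.Icc (a + 1) b, t ℓ)
        = (X' a - ∑ ℓ ∈ Finset.Icc (a + 1) b, t ℓ) - t (b + 1) := by ring
    rw [e1]
    simp only [max_assoc, max_comm, max_left_comm]
    rfl

/-- If for some `n ≥ 1` we have `∑_{ℓ=-n+1}^{0} t ℓ > X' (-n)`, then
`X' 0 = max_{-n < j ≤ 0} (s j - ∑_{ℓ=j+1}^{0} t ℓ)`, and in particular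
`X' 0 ≤ X* 0 = sup_{k ≥ 0} (s (-k) - ∑_{ℓ=-k+1}^{0} t ℓ)`. -/
theorem stmt6 (s t : ℤ → ℝ) (hs : ∀ j, 0 < s j) (ht : ∀ j, 0 < t j)
    (X' : ℤ → ℝ) (hX' : ∀ j : ℤ, X' (j + 1) = max (X' j - t (j + 1)) (s (j + 1)))
    (hbdd : BddAbove (Set.range fun k : ℕ =>
      s (-(k : ℤ)) - ∑ ℓ ∈ Finset.Icc (-(k : ℤ) + 1) 0, t ℓ))
    (n : ℕ) (hn : 1 ≤ n)
    (hdrain : ∑ ℓ ∈ Finset.Icc (-(n : ℤ) + 1) 0, t ℓ > X' (-(n : ℤ))) :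
    X' 0 = (Finset.Icc (-(n : ℤ) + 1) 0).sup'
        (Finset.nonempty_Icc.mpr (by omega))
        (fun j => s j - ∑ ℓ ∈ Finset.Icc (j + 1) 0, t ℓ) ∧
    X' 0 ≤ ⨆ k : ℕ, (s (-(k : ℤ)) - ∑ ℓ ∈ Finset.Icc (-(k : ℤ) + 1) 0, t ℓ) := by
  have H := aux6 s t X' hX' (-(n : ℤ)) n hn
  simp only [show -(n : ℤ) + (n : ℤ) = 0 from by ring] at H
  have hmem : (0 : ℤ) ∈ Finset.Icc (-(n : ℤ) + 1) 0 := by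
    simp only [Finset.mem_Icc]; omega
  have hge : (0 : ℝ) ≤ (Finset.Icc (-(n : ℤ) + 1) 0).sup'
      (Finset.nonempty_Icc.mpr (by omega))
      (fun j => s j - ∑ ℓ ∈ Finset.Icc (j + 1) 0, t ℓ) := by
    have := Finset.le_sup' (f := fun j => s j - ∑ ℓ ∈ Finset.Icc (j + 1) 0, t ℓ)
      hmem
    have hemp : Finset.Icc (0 + 1 : ℤ) 0 = ∅ := Finset.Icc_eq_empty (by omega)
    rw [hemp, Finset.sum_empty] at this
    linarith [hs 0]
  have hlt : X' (-(n : ℤ)) - ∑ ℓ ∈ Finset.Icc (-(n : ℤ) + 1) 0, t ℓ < 0 := by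
    linarith
  have part1 : X' 0 = (Finset.Icc (-(n : ℤ) + 1) 0).sup'
      (Finset.nonempty_Icc.mpr (by omega))
      (fun j => s j - ∑ ℓ ∈ Finset.Icc (j + 1) 0, t ℓ) := by
    rw [H]
    exact max_eq_right (le_trans hlt.le hge)
  refine ⟨part1, ?_⟩
  rw [part1]
  apply Finset.sup'_le
  intro j hj
  simp only [Finset.mem_Icc] at hj
  set k : ℕ := (-j).toNat with hkdef
  have hk : -(k : ℤ) = j := by omega
  calc s j - ∑ ℓ ∈ Finset.Icc (j + 1) 0, t ℓ
      = s (-(k : ℤ)) - ∑ ℓ ∈ Finset.Icc (-(k : ℤ) + 1) 0, t ℓ := by rw [hk]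
    _ ≤ _ := le_ciSup hbdd k
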